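/- Let V be a real vector space, N a seminorm on V, ε ∈ (0,1), and x₀,…,x_d ∈ V. If N(∑_{k=0}^d λ^k x_k) ≤ 1 for all λ ∈ [−ε, ε], then N(∑_{k=0}^d x_k) ≤ 2^{d²/2 + d} · ε^{−d}. -/

import Mathlib

open Finset Set

private lemma natkey (d : ℕ) : d ^ (2*d) ≤ 2 ^ (d^2) * (d.factorial)^2 := by
  induction d with
  | zero => simp
  | succ d ih =>
    have h1 : (d+1) ^ (2*d) ≤ 2^(2*d) * d^(2*d) := by
      rcases Nat.eq_zero_or_pos d with h | h
      · simp [h]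
      · calc (d+1) ^ (2*d) ≤ (2*d) ^ (2*d) := Nat.pow_le_pow_left (by omega) _
          _ = 2^(2*d) * d^(2*d) := by rw [Nat.mul_pow]
    calc (d+1) ^ (2*(d+1)) = (d+1)^(2*d) * (d+1)^2 := by ring
      _ ≤ 2^(2*d) * d^(2*d) * (d+1)^2 := Nat.mul_le_mul_right _ h1
      _ ≤ 2^(2*d) * (2^(d^2) * (d.factorial)^2) * (d+1)^2 :=
          Nat.mul_le_mul_right _ (Nat.mul_le_mul_left _ ih)
      _ ≤ 2 * (2^(2*d) * (2^(d^2) * (d.factorial)^2) * (d+1)^2) :=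
          Nat.le_mul_of_pos_left _ (by norm_num)
      _ = 2 ^ ((d+1)^2) * ((d+1).factorial)^2 := by
          rw [Nat.factorial_succ, show (d+1)^2 = d^2 + 2*d + 1 by ring,
            pow_add, pow_add, pow_one, mul_pow]
          ring

private lemma realkey (d : ℕ) : (d:ℝ)^d ≤ (2:ℝ) ^ ((d:ℝ)^2/2) * d.factorial := by
  have h2 : ((2:ℝ) ^ ((d:ℝ)^2/2)) ^ 2 = (2:ℝ)^(d^2 : ℕ) := by
    rw [← Real.rpow_natCast ((2:ℝ) ^ ((d:ℝ)^2/2)) 2, ← Real.rpow_mul (by norm_num),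
      ← Real.rpow_natCast 2 (d^2)]
    push_cast
    ring_nf
  have hnat := natkey d
  have hcast : ((d:ℝ)^d)^2 ≤ ((2:ℝ) ^ ((d:ℝ)^2/2) * d.factorial)^2 := by
    rw [mul_pow, h2]
    calc ((d:ℝ)^d)^2 = ((d ^ (2*d) : ℕ) : ℝ) := by push_cast; ring
      _ ≤ ((2 ^ (d^2) * (d.factorial)^2 : ℕ) : ℝ) := by exact_mod_cast hnat
      _ = (2:ℝ)^(d^2 : ℕ) * (d.factorial:ℝ)^2 := by push_cast; ring
  have ha : (0:ℝ) ≤ (d:ℝ)^d := by positivity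
  have hb : (0:ℝ) ≤ (2:ℝ) ^ ((d:ℝ)^2/2) * d.factorial := by positivity
  nlinarith

private lemma prod_desc (n : ℕ) : ∏ i ∈ range n, ((n : ℝ) - i) = n.factorial := by
  induction n with
  | zero => simp
  | succ n ih =>
    rw [Finset.prod_range_succ']
    push_cast
    simp only [show ∀ i:ℕ, ((n:ℝ)+1) - ((i:ℝ)+1) = (n:ℝ) - i from fun i => by ring]
    rw [ih, Nat.factorial_succ]
    push_cast; ring

private lemma prod_abs (d j : ℕ) (hj : j ≤ d) :
    ∏ i ∈ (range (d+1)).erase j, |(j:ℝ) - i| = j.factorial * (d-j).factorial := by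
  induction d with
  | zero =>
    interval_cases j
    simp
  | succ d ih =>
    rcases Nat.lt_or_ge j (d+1) with h | h
    · have hj' : j ≤ d := by omega
      have hstep : (range (d+2)).erase j = insert (d+1) ((range (d+1)).erase j) := by
        ext i
        simp [Finset.mem_erase, Finset.mem_range, Finset.mem_insert]
        omega
      rw [hstep, Finset.prod_insert (by simp), ih hj']
      have hcast : ((j:ℝ)) ≤ d := Nat.cast_le.mpr hj'
      have : |(j:ℝ) - (d+1:ℕ)| = ((d+1-j : ℕ) : ℝ) := by
        rw [abs_of_nonpos (by push_cast; linarith)]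
        push_cast [show j ≤ d+1 from by omega]
        ring
      rw [this, show d+1-j = (d-j)+1 from by omega, Nat.factorial_succ]
      push_cast
      ring
    · have hjd : j = d+1 := by omega
      subst hjd
      have : (range (d+2)).erase (d+1) = range (d+1) := by
        ext i; simp [Finset.mem_erase, Finset.mem_range]; omega
      rw [this]
      have : ∀ i ∈ range (d+1), |((d+1:ℕ):ℝ) - i| = ((d+1:ℝ) - i) := by
        intro i hi
        simp only [Finset.mem_range] at hi
        rw [abs_of_nonneg]
        · push_cast; ring_nf
        · push_cast
          have : (i:ℝ) ≤ d := by exact_mod_cast Nat.le_of_lt_succ hi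
          linarith
      rw [Finset.prod_congr rfl this]
      have := prod_desc (d+1)
      push_cast at this ⊢
      simp [this]

private lemma seminorm_sum_le {V : Type*} [AddCommGroup V] [Module ℝ V] (N : Seminorm ℝ V)
    {ι : Type*} (s : Finset ι) (f : ι → V) :
    N (∑ i ∈ s, f i) ≤ ∑ i ∈ s, N (f i) := by
  induction s using Finset.cons_induction with
  | empty => simp
  | cons a s ha ih =>
    rw [Finset.sum_cons, Finset.sum_cons]
    exact le_trans (map_add_le_add N _ _) (add_le_add_right ih _)

private lemma lagrange_id {n : ℕ} (v : Fin (n+1) → ℝ) (hv : Function.Injective v)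
    (k : ℕ) (hk : k ≤ n) (t : ℝ) :
    t ^ k = ∑ i : Fin (n+1), (v i)^k *
      ∏ j ∈ (univ : Finset (Fin (n+1))).erase i, ((t - v j) / (v i - v j)) := by
  have hvs : Set.InjOn v (univ : Finset (Fin (n+1))) := fun a _ b _ h => hv h
  have hdeg : (Polynomial.X ^ k : Polynomial ℝ).degree < #(univ : Finset (Fin (n+1))) := by
    rw [Polynomial.degree_X_pow]
    simp only [Finset.card_univ, Fintype.card_fin]
    exact_mod_cast Nat.lt_succ_of_le hk
  have := Lagrange.eq_interpolate hvs hdeg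
  have heval := congrArg (Polynomial.eval t) this
  rw [Polynomial.eval_pow, Polynomial.eval_X] at heval
  rw [heval, Lagrange.interpolate_apply, Polynomial.eval_finset_sum]
  refine Finset.sum_congr rfl fun i _ => ?_
  rw [Polynomial.eval_mul, Polynomial.eval_C, Polynomial.eval_pow, Polynomial.eval_X]
  congr 1
  rw [Lagrange.basis, Polynomial.eval_prod]
  refine Finset.prod_congr rfl fun j hj => ?_
  rw [Lagrange.basisDivisor, Polynomial.eval_mul, Polynomial.eval_C,
    Polynomial.eval_sub, Polynomial.eval_X, Polynomial.eval_C]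
  rw [div_eq_inv_mul]

private lemma fin_erase_prod {n : ℕ} (i : Fin (n+1)) (f : ℕ → ℝ) :
    ∏ j ∈ (univ : Finset (Fin (n+1))).erase i, f (j:ℕ)
      = ∏ j ∈ (range (n+1)).erase (i:ℕ), f j := by
  refine Finset.prod_bij (fun j _ => (j:ℕ)) ?_ ?_ ?_ ?_
  · intro a ha
    rw [Finset.mem_erase] at ha
    rw [Finset.mem_erase, Finset.mem_range]
    exact ⟨fun h => ha.1 (Fin.ext h), a.isLt⟩
  · intro a _ b _ h
    exact Fin.ext h
  · intro b hb
    rw [Finset.mem_erase, Finset.mem_range] at hb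
    refine ⟨⟨b, hb.2⟩, ?_, rfl⟩
    rw [Finset.mem_erase]
    exact ⟨fun h => hb.1 (by simpa using congrArg Fin.val h), Finset.mem_univ _⟩
  · intros; rfl

/-- If `N (∑ λ^k • x k) ≤ 1` for all `λ ∈ [-ε, ε]`, then
`N (∑ x k) ≤ 2^(d²/2 + d) * ε^(-d)`. -/
theorem stmt0 {V : Type*} [AddCommGroup V] [Module ℝ V]
    (N : Seminorm ℝ V) (d : ℕ) (ε : ℝ) (hε : ε ∈ Set.Ioo (0:ℝ) 1)
    (x : Fin (d + 1) → V)
    (h : ∀ lam ∈ Set.Icc (-ε) ε, N (∑ k : Fin (d + 1), lam ^ (k : ℕ) • x k) ≤ 1) :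
    N (∑ k : Fin (d + 1), x k) ≤
      (2 : ℝ) ^ ((d : ℝ) ^ 2 / 2 + d) * ε ^ (-(d : ℝ)) := by
  obtain ⟨hε0, hε1⟩ := hε
  rcases Nat.eq_zero_or_pos d with hd0 | hdpos
  · subst hd0
    have h0 := h 0 ⟨by linarith, le_of_lt hε0⟩
    simp only [Fin.sum_univ_succ, Fin.sum_univ_zero, add_zero] at h0 ⊢
    norm_num at h0 ⊢
    exact h0
  -- d ≥ 1
  have hdR : (0:ℝ) < d := by exact_mod_cast hdpos
  set v : Fin (d+1) → ℝ := fun i => ε * (2*(i:ℝ) - d) / d with hv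
  have hvinj : Function.Injective v := by
    intro a b hab
    simp only [hv] at hab
    field_simp at hab
    exact Fin.ext (by exact_mod_cast (by linarith : ((a:ℕ):ℝ) = ((b:ℕ):ℝ)))
  have hvmem : ∀ i : Fin (d+1), v i ∈ Set.Icc (-ε) ε := by
    intro i
    have hi : (i:ℝ) ≤ d := by exact_mod_cast Nat.le_of_lt_succ i.isLt
    have hi0 : (0:ℝ) ≤ (i:ℝ) := Nat.cast_nonneg _
    have hkey : v i * d = ε * (2*(i:ℝ) - d) := by
      simp only [hv]; field_simp
    constructor
    · nlinarith
    · nlinarith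
  set c : Fin (d+1) → ℝ := fun i =>
    ∏ j ∈ (univ : Finset (Fin (d+1))).erase i, ((1 - v j) / (v i - v j)) with hc
  -- step A
  have hA : (∑ k : Fin (d+1), x k) = ∑ i : Fin (d+1), c i • ∑ k : Fin (d+1), (v i)^(k:ℕ) • x k := by
    have : ∀ k : Fin (d+1), x k = ∑ i : Fin (d+1), (c i * (v i)^(k:ℕ)) • x k := by
      intro k
      have hid := lagrange_id v hvinj (k:ℕ) (Nat.le_of_lt_succ k.isLt) 1
      rw [one_pow] at hid
      calc x k = (1:ℝ) • x k := (one_smul _ _).symm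
        _ = (∑ i : Fin (d+1), (v i)^(k:ℕ) * c i) • x k := by rw [← hid]
        _ = ∑ i : Fin (d+1), (c i * (v i)^(k:ℕ)) • x k := by
            rw [Finset.sum_smul]
            exact Finset.sum_congr rfl fun i _ => by rw [mul_comm]
    calc (∑ k : Fin (d+1), x k) = ∑ k : Fin (d+1), ∑ i : Fin (d+1), (c i * (v i)^(k:ℕ)) • x k :=
        Finset.sum_congr rfl fun k _ => this k
      _ = ∑ i : Fin (d+1), ∑ k : Fin (d+1), (c i * (v i)^(k:ℕ)) • x k := Finset.sum_comm
      _ = ∑ i : Fin (d+1), c i • ∑ k : Fin (d+1), (v i)^(k:ℕ) • x k := by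
          refine Finset.sum_congr rfl fun i _ => ?_
          rw [Finset.smul_sum]
          exact Finset.sum_congr rfl fun k _ => by rw [smul_smul]
  -- step B
  have hB : N (∑ k : Fin (d+1), x k) ≤ ∑ i : Fin (d+1), |c i| := by
    rw [hA]
    calc N (∑ i : Fin (d+1), c i • ∑ k : Fin (d+1), (v i)^(k:ℕ) • x k)
        ≤ ∑ i : Fin (d+1), N (c i • ∑ k : Fin (d+1), (v i)^(k:ℕ) • x k) :=
          seminorm_sum_le N _ _
      _ ≤ ∑ i : Fin (d+1), |c i| := by
          refine Finset.sum_le_sum fun i _ => ?_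
          rw [map_smul_eq_mul]
          calc |c i| * N (∑ k : Fin (d+1), (v i)^(k:ℕ) • x k)
              ≤ |c i| * 1 := by
                exact mul_le_mul_of_nonneg_left (h (v i) (hvmem i)) (abs_nonneg _)
            _ = |c i| := mul_one _
  -- step C: bound on |c i|
  have hC : ∀ i : Fin (d+1), |c i| ≤ ((d:ℝ)/ε)^d / ((i:ℕ).factorial * (d - (i:ℕ)).factorial) := by
    intro i
    have hile : (i:ℕ) ≤ d := Nat.le_of_lt_succ i.isLt
    have habs : |c i| = ∏ j ∈ (univ : Finset (Fin (d+1))).erase i, (|1 - v j| / |v i - v j|) := by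
      rw [hc]
      rw [Finset.abs_prod]
      exact Finset.prod_congr rfl fun j _ => abs_div _ _
    have hden : ∀ j : Fin (d+1), |v i - v j| = (2*ε/d) * |((i:ℕ):ℝ) - ((j:ℕ):ℝ)| := by
      intro j
      have : v i - v j = (2*ε/d) * (((i:ℕ):ℝ) - ((j:ℕ):ℝ)) := by
        simp only [hv]; field_simp; ring
      rw [this, abs_mul, abs_of_nonneg (by positivity)]
    have hcard : #((univ : Finset (Fin (d+1))).erase i) = d := by
      rw [Finset.card_erase_of_mem (Finset.mem_univ _), Finset.card_univ, Fintype.card_fin]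
      rfl
    have hnum : ∀ j : Fin (d+1), |1 - v j| ≤ 2 := by
      intro j
      obtain ⟨h1, h2⟩ := hvmem j
      rw [abs_le]; constructor <;> linarith
    -- rewrite c i bound
    rw [habs]
    have hprod : ∏ j ∈ (univ : Finset (Fin (d+1))).erase i, (|1 - v j| / |v i - v j|)
        = (∏ j ∈ (univ : Finset (Fin (d+1))).erase i, |1 - v j|)
          / (∏ j ∈ (univ : Finset (Fin (d+1))).erase i, |v i - v j|) := by
      rw [Finset.prod_div_distrib]
    rw [hprod]
    have hdenprod : ∏ j ∈ (univ : Finset (Fin (d+1))).erase i, |v i - v j|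
        = (2*ε/d)^d * ((i:ℕ).factorial * (d - (i:ℕ)).factorial) := by
      calc ∏ j ∈ (univ : Finset (Fin (d+1))).erase i, |v i - v j|
          = ∏ j ∈ (univ : Finset (Fin (d+1))).erase i, ((2*ε/d) * |((i:ℕ):ℝ) - ((j:ℕ):ℝ)|) :=
            Finset.prod_congr rfl fun j _ => hden j
        _ = (2*ε/d)^d * ∏ j ∈ (univ : Finset (Fin (d+1))).erase i, |((i:ℕ):ℝ) - ((j:ℕ):ℝ)| := by
            rw [Finset.prod_mul_distrib, Finset.prod_const, hcard]
        _ = (2*ε/d)^d * ((i:ℕ).factorial * (d - (i:ℕ)).factorial) := by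
            rw [fin_erase_prod i (fun m => |((i:ℕ):ℝ) - (m:ℝ)|), prod_abs d (i:ℕ) hile]
    have hnumprod : ∏ j ∈ (univ : Finset (Fin (d+1))).erase i, |1 - v j| ≤ 2^d := by
      calc ∏ j ∈ (univ : Finset (Fin (d+1))).erase i, |1 - v j|
          ≤ ∏ _j ∈ (univ : Finset (Fin (d+1))).erase i, (2:ℝ) :=
            Finset.prod_le_prod (fun j _ => abs_nonneg _) (fun j _ => hnum j)
        _ = 2^d := by rw [Finset.prod_const, hcard]
    rw [hdenprod]
    have hpos : (0:ℝ) < (2*ε/d)^d * ((i:ℕ).factorial * (d - (i:ℕ)).factorial) := by positivity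
    rw [div_le_div_iff₀ hpos (by positivity)]
    calc (∏ j ∈ (univ : Finset (Fin (d+1))).erase i, |1 - v j|)
          * ((i:ℕ).factorial * (d - (i:ℕ)).factorial : ℝ)
        ≤ 2^d * ((i:ℕ).factorial * (d - (i:ℕ)).factorial : ℝ) := by
          exact mul_le_mul_of_nonneg_right hnumprod (by positivity)
      _ = ((d:ℝ)/ε * (2*ε/d))^d * (((i:ℕ).factorial : ℝ) * (d - (i:ℕ)).factorial) := by
          rw [show (d:ℝ)/ε * (2*ε/d) = 2 from by field_simp]
      _ = ((d:ℝ)/ε)^d * ((2*ε/d)^d * ((i:ℕ).factorial * (d - (i:ℕ)).factorial)) := by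
          rw [mul_pow]
          ring
  -- sum of the bounds
  have hsum : ∑ i : Fin (d+1), (1:ℝ) / ((i:ℕ).factorial * (d-(i:ℕ)).factorial)
      = 2^d / d.factorial := by
    have hterm : ∀ i : Fin (d+1), (1:ℝ)/((i:ℕ).factorial * (d-(i:ℕ)).factorial)
        = (d.choose (i:ℕ) : ℝ) / d.factorial := by
      intro i
      have hile : (i:ℕ) ≤ d := Nat.le_of_lt_succ i.isLt
      have hmul := Nat.choose_mul_factorial_mul_factorial hile
      have hmulR : (d.choose (i:ℕ) : ℝ) * ((i:ℕ).factorial * (d-(i:ℕ)).factorial)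
          = d.factorial := by
        rw [← mul_assoc]
        exact_mod_cast congrArg (Nat.cast : ℕ → ℝ) hmul
      rw [div_eq_div_iff (by positivity) (by positivity), one_mul, ← hmulR]
    rw [Finset.sum_congr rfl (fun i _ => hterm i), ← Finset.sum_div]
    congr 1
    rw [Fin.sum_univ_eq_sum_range (fun i => (d.choose i : ℝ)) (d+1)]
    exact_mod_cast congrArg (Nat.cast : ℕ → ℝ) (Nat.sum_range_choose d)
  have hrk := realkey d
  have hfac : (0:ℝ) < d.factorial := by exact_mod_cast Nat.factorial_pos d
  have hdd : (d:ℝ)^d / d.factorial ≤ (2:ℝ) ^ ((d:ℝ)^2/2) := by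
    rw [div_le_iff₀ hfac]
    exact hrk
  calc N (∑ k : Fin (d+1), x k) ≤ ∑ i : Fin (d+1), |c i| := hB
    _ ≤ ∑ i : Fin (d+1), ((d:ℝ)/ε)^d / ((i:ℕ).factorial * (d-(i:ℕ)).factorial) :=
        Finset.sum_le_sum fun i _ => hC i
    _ = ((d:ℝ)/ε)^d * ∑ i : Fin (d+1), (1:ℝ) / ((i:ℕ).factorial * (d-(i:ℕ)).factorial) := by
        rw [Finset.mul_sum]
        exact Finset.sum_congr rfl fun i _ => by rw [mul_one_div]
    _ = ((d:ℝ)/ε)^d * (2^d / d.factorial) := by rw [hsum]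
    _ = ((d:ℝ)^d / d.factorial) * (2^d / ε^d) := by
        rw [div_pow]; ring
    _ ≤ (2:ℝ) ^ ((d:ℝ)^2/2) * (2^d / ε^d) :=
        mul_le_mul_of_nonneg_right hdd (by positivity)
    _ = (2 : ℝ) ^ ((d : ℝ) ^ 2 / 2 + d) * ε ^ (-(d : ℝ)) := by
        rw [Real.rpow_add (by norm_num : (0:ℝ) < 2), Real.rpow_natCast,
          Real.rpow_neg hε0.le, Real.rpow_natCast]
        ring
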